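/- Let N ≥ 2, a ∈ ℂ \ {0}, and let ζ_+, ζ_- ∈ ℂ \ {0} with ζ_+ ≠ ζ_-, |ζ_+| ≤ |ζ_-| < 1. Define c_k = (ζ_+^{k+1} − ζ_-^{k+1})/(a(ζ_+ − ζ_-)) for k ≥ 0. Let E be the N×N matrix with E_{j,k} = c_{j−k−1} when j ≥ k + 1 and E_{j,k} = 0 otherwise, and let E_+ = (c_0, c_1, …, c_{N−1})^t ∈ ℂ^N and E_- = (c_{N−1}, …, c_1, c_0) ∈ ℂ^N. Then, with ‖·‖ the operator norm on ℓ²(ℂ^N) and the Euclidean norm on vectors: ‖E‖ ≤ |a|^{-1} · min(N, 2/(1 − |ζ_-|)) · min(N, 2/(1 − |ζ_-|), 2/|1 − ζ_+/ζ_-|), and ‖E_+‖ = ‖E_-‖ ≤ |a|^{-1} · min(N, 2/(1 − |ζ_-|))^{1/2} · min(N, 2/(1 − |ζ_-|), 2/|1 − ζ_+/ζ_-|). -/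

import Mathlib

noncomputable section

/-- `c_k = (ζ₊^{k+1} − ζ₋^{k+1})/(a(ζ₊ − ζ₋))`. -/
def grushinC (a ζp ζm : ℂ) (k : ℕ) : ℂ :=
  (ζp ^ (k + 1) - ζm ^ (k + 1)) / (a * (ζp - ζm))

/-- The N×N strictly lower-triangular Toeplitz block `E` with
`E_{j,k} = c_{j−k−1}` for `j ≥ k + 1`. -/
def grushinEblock (N : ℕ) (a ζp ζm : ℂ) : Matrix (Fin N) (Fin N) ℂ :=
  fun j k =>
    if (k : ℕ) + 1 ≤ (j : ℕ) then grushinC a ζp ζm ((j : ℕ) - (k : ℕ) - 1) else 0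

/-- `E₊ = (c_0, …, c_{N−1})ᵗ` as a vector in Euclidean space. -/
def grushinEp (N : ℕ) (a ζp ζm : ℂ) : EuclideanSpace ℂ (Fin N) :=
  WithLp.toLp 2 fun j => grushinC a ζp ζm (j : ℕ)

/-- `E₋ = (c_{N−1}, …, c_0)` as a vector in Euclidean space. -/
def grushinEm (N : ℕ) (a ζp ζm : ℂ) : EuclideanSpace ℂ (Fin N) :=
  WithLp.toLp 2 fun k => grushinC a ζp ζm (N - 1 - (k : ℕ))

open Finset

/-- Schur-type bound for the `ℓ²` operator norm of a matrix. -/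
lemma grushin_schur_bound {N : ℕ} (M : Matrix (Fin N) (Fin N) ℂ) (r : ℝ) (hr : 0 ≤ r)
    (hrow : ∀ j, ∑ k, ‖M j k‖ ≤ r)
    (hcol : ∀ k, ∑ j, ‖M j k‖ ≤ r) :
    ‖Matrix.toEuclideanCLM (𝕜 := ℂ) M‖ ≤ r := by
  refine ContinuousLinearMap.opNorm_le_bound _ hr fun v => ?_
  have happ : ∀ j, (Matrix.toEuclideanCLM (𝕜 := ℂ) M v) j = ∑ k, M j k * v k := fun j => by
    have h := congrFun (Matrix.ofLp_toEuclideanCLM (𝕜 := ℂ) M v) j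
    simpa [Matrix.toLin'_apply, Matrix.mulVec, dotProduct] using h
  rw [EuclideanSpace.norm_eq, EuclideanSpace.norm_eq]
  have key : ∑ j, ‖(Matrix.toEuclideanCLM (𝕜 := ℂ) M v) j‖ ^ 2
      ≤ r ^ 2 * ∑ k, ‖v k‖ ^ 2 := by
    have step1 : ∀ j : Fin N, ‖(Matrix.toEuclideanCLM (𝕜 := ℂ) M v) j‖ ^ 2
        ≤ r * ∑ k, ‖M j k‖ * ‖v k‖ ^ 2 := by
      intro j
      rw [happ j]
      have h1 : ‖∑ k, M j k * v k‖ ≤ ∑ k, ‖M j k‖ * ‖v k‖ := by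
        refine le_trans (norm_sum_le _ _) (le_of_eq ?_)
        refine Finset.sum_congr rfl fun k _ => ?_
        simp
      have h2 : (∑ k, ‖M j k‖ * ‖v k‖) ^ 2
          ≤ (∑ k, ‖M j k‖) * ∑ k, ‖M j k‖ * ‖v k‖ ^ 2 := by
        have hcs := Finset.sum_mul_sq_le_sq_mul_sq Finset.univ
          (fun k => Real.sqrt (‖M j k‖))
          (fun k => Real.sqrt (‖M j k‖) * ‖v k‖)
        calc (∑ k, ‖M j k‖ * ‖v k‖) ^ 2
            = (∑ k, Real.sqrt (‖M j k‖) *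
                (Real.sqrt (‖M j k‖) * ‖v k‖)) ^ 2 := by
              congr 1; refine Finset.sum_congr rfl fun k _ => ?_
              rw [← mul_assoc, Real.mul_self_sqrt (norm_nonneg _)]
          _ ≤ (∑ k, Real.sqrt (‖M j k‖) ^ 2) *
                ∑ k, (Real.sqrt (‖M j k‖) * ‖v k‖) ^ 2 := hcs
          _ = (∑ k, ‖M j k‖) * ∑ k, ‖M j k‖ * ‖v k‖ ^ 2 := by
              congr 1
              · exact Finset.sum_congr rfl fun k _ => Real.sq_sqrt (norm_nonneg _)
              · refine Finset.sum_congr rfl fun k _ => ?_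
                rw [mul_pow, Real.sq_sqrt (norm_nonneg _)]
      calc ‖∑ k, M j k * v k‖ ^ 2 ≤ (∑ k, ‖M j k‖ * ‖v k‖) ^ 2 :=
            pow_le_pow_left₀ (norm_nonneg _) h1 2
        _ ≤ (∑ k, ‖M j k‖) * ∑ k, ‖M j k‖ * ‖v k‖ ^ 2 := h2
        _ ≤ r * ∑ k, ‖M j k‖ * ‖v k‖ ^ 2 := by
            refine mul_le_mul_of_nonneg_right (hrow j) ?_
            exact Finset.sum_nonneg fun k _ => by positivity
    calc ∑ j, ‖(Matrix.toEuclideanCLM (𝕜 := ℂ) M v) j‖ ^ 2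
        ≤ ∑ j : Fin N, (r * ∑ k, ‖M j k‖ * ‖v k‖ ^ 2) :=
          Finset.sum_le_sum fun j _ => step1 j
      _ = r * ∑ k : Fin N, (∑ j : Fin N, ‖M j k‖) * ‖v k‖ ^ 2 := by
          rw [← Finset.mul_sum, Finset.sum_comm]
          congr 1
          exact Finset.sum_congr rfl fun k _ => by rw [Finset.sum_mul]
      _ ≤ r * ∑ k : Fin N, r * ‖v k‖ ^ 2 := by
          refine mul_le_mul_of_nonneg_left (Finset.sum_le_sum fun k _ => ?_) hr
          exact mul_le_mul_of_nonneg_right (hcol k) (by positivity)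
      _ = r ^ 2 * ∑ k, ‖v k‖ ^ 2 := by rw [← Finset.mul_sum]; ring
  calc Real.sqrt (∑ j, ‖(Matrix.toEuclideanCLM (𝕜 := ℂ) M v) j‖ ^ 2)
      ≤ Real.sqrt (r ^ 2 * ∑ k, ‖v k‖ ^ 2) := Real.sqrt_le_sqrt key
    _ = r * Real.sqrt (∑ k, ‖v k‖ ^ 2) := by
        rw [Real.sqrt_mul (by positivity), Real.sqrt_sq hr]

/-- First bound: `|c_k| ≤ |a|⁻¹ (k+1) |ζ₋|^k`. -/
lemma grushin_cbound1 {a ζp ζm : ℂ} (hne : ζp ≠ ζm)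
    (h1 : ‖ζp‖ ≤ ‖ζm‖) (k : ℕ) :
    ‖grushinC a ζp ζm k‖
      ≤ (‖a‖)⁻¹ * (((k : ℝ) + 1) * ‖ζm‖ ^ k) := by
  have hd : ζp - ζm ≠ 0 := sub_ne_zero.2 hne
  have hg : (∑ i ∈ range (k + 1), ζp ^ i * ζm ^ (k - i)) * (ζp - ζm)
      = ζp ^ (k + 1) - ζm ^ (k + 1) := by
    simpa using geom_sum₂_mul ζp ζm (k + 1)
  have hrepr : grushinC a ζp ζm k
      = (∑ i ∈ range (k + 1), ζp ^ i * ζm ^ (k - i)) / a := by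
    unfold grushinC
    rw [← hg, mul_comm a (ζp - ζm),
      mul_comm (∑ i ∈ range (k + 1), ζp ^ i * ζm ^ (k - i)) (ζp - ζm),
      mul_div_mul_left _ _ hd]
  rw [hrepr, norm_div, div_eq_inv_mul]
  refine mul_le_mul_of_nonneg_left ?_ (by positivity)
  refine le_trans (norm_sum_le _ _) ?_
  have hterm : ∀ i ∈ range (k + 1), ‖ζp ^ i * ζm ^ (k - i)‖
      ≤ ‖ζm‖ ^ k := by
    intro i hi
    rw [norm_mul, norm_pow, norm_pow]
    calc ‖ζp‖ ^ i * ‖ζm‖ ^ (k - i)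
        ≤ ‖ζm‖ ^ i * ‖ζm‖ ^ (k - i) :=
          mul_le_mul_of_nonneg_right (pow_le_pow_left₀ (norm_nonneg _) h1 i)
            (by positivity)
      _ = ‖ζm‖ ^ k := by
          rw [← pow_add]
          congr 1
          simp only [mem_range] at hi
          omega
  calc ∑ i ∈ range (k + 1), ‖ζp ^ i * ζm ^ (k - i)‖
      ≤ ∑ _i ∈ range (k + 1), ‖ζm‖ ^ k := Finset.sum_le_sum hterm
    _ = ((k : ℝ) + 1) * ‖ζm‖ ^ k := by
        rw [Finset.sum_const, card_range, nsmul_eq_mul]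
        push_cast
        ring

/-- Second bound: `|c_k| ≤ |a|⁻¹ (2/|1−ζ₊/ζ₋|) |ζ₋|^k`. -/
lemma grushin_cbound2 {a ζp ζm : ℂ} (ha : a ≠ 0) (hm : ζm ≠ 0) (hne : ζp ≠ ζm)
    (h1 : ‖ζp‖ ≤ ‖ζm‖) (k : ℕ) :
    ‖grushinC a ζp ζm k‖
      ≤ (‖a‖)⁻¹ *
        (2 / ‖1 - ζp / ζm‖ * ‖ζm‖ ^ k) := by
  have hr1 : ζp / ζm - 1 ≠ 0 := by
    rw [sub_ne_zero]
    intro h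
    exact hne (by field_simp at h; simpa using h)
  have hrepr : grushinC a ζp ζm k
      = ζm ^ k * ((ζp / ζm) ^ (k + 1) - 1) / (a * (ζp / ζm - 1)) := by
    unfold grushinC
    rw [div_eq_div_iff (mul_ne_zero ha (sub_ne_zero.2 hne)) (mul_ne_zero ha hr1)]
    field_simp
    rw [← pow_succ', div_pow, mul_sub, mul_div_cancel₀ _ (pow_ne_zero _ hm), mul_one]
  rw [hrepr, norm_div, norm_mul, norm_mul, norm_pow]
  have habs : ‖(ζp / ζm) ^ (k + 1) - 1‖ ≤ 2 := by
    refine le_trans (norm_sub_le _ _) ?_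
    have h2 : ‖(ζp / ζm) ^ (k + 1)‖ ≤ 1 := by
      rw [norm_pow]
      refine pow_le_one₀ (norm_nonneg _) ?_
      rw [norm_div]
      exact div_le_one_of_le₀ h1 (norm_nonneg _)
    rw [norm_one]
    linarith
  have h1r : ‖ζp / ζm - 1‖ = ‖1 - ζp / ζm‖ :=
    norm_sub_rev _ _
  rw [h1r]
  have hpos : 0 < ‖1 - ζp / ζm‖ := by
    rw [← h1r]
    exact norm_pos_iff.mpr hr1
  have ha' : ‖a‖ ≠ 0 := norm_ne_zero_iff.mpr ha
  have rhs_eq : (‖a‖)⁻¹ * (2 / ‖1 - ζp / ζm‖ * ‖ζm‖ ^ k)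
      = ‖ζm‖ ^ k * 2 / (‖a‖ * ‖1 - ζp / ζm‖) := by
    field_simp
  rw [rhs_eq]
  gcongr

/-- `(1-x) ∑_{k<N} (k+1) x^k = ∑_{k<N} x^k − N x^N`. -/
lemma grushin_T_identity (x : ℝ) (N : ℕ) :
    (1 - x) * ∑ k ∈ range N, ((k : ℝ) + 1) * x ^ k
      = (∑ k ∈ range N, x ^ k) - N * x ^ N := by
  induction N with
  | zero => simp
  | succ n ih =>
    rw [sum_range_succ, sum_range_succ, mul_add, ih]
    push_cast
    ring

/-- Geometric sum bound. -/
lemma grushin_geom_le {x : ℝ} (hx0 : 0 ≤ x) (hx1 : x < 1) (n : ℕ) :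
    ∑ k ∈ range n, x ^ k ≤ 1 / (1 - x) := by
  have h1x : 0 < 1 - x := by linarith
  rw [le_div_iff₀ h1x]
  have hid : (∑ k ∈ range n, x ^ k) * (1 - x) = 1 - x ^ n := by
    have := geom_sum_mul x n
    nlinarith [this]
  rw [hid]
  nlinarith [pow_nonneg hx0 n]

/-- `(k+1) x^k ≤ 1/(1-x)`. -/
lemma grushin_kx_le {x : ℝ} (hx0 : 0 ≤ x) (hx1 : x < 1) (k : ℕ) :
    ((k : ℝ) + 1) * x ^ k ≤ 1 / (1 - x) := by
  refine le_trans ?_ (grushin_geom_le hx0 hx1 (k + 1))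
  have : ∀ i ∈ range (k + 1), x ^ k ≤ x ^ i := fun i hi =>
    pow_le_pow_of_le_one hx0 hx1.le (by simp only [mem_range] at hi; omega)
  calc ((k : ℝ) + 1) * x ^ k = ∑ _i ∈ range (k + 1), x ^ k := by
        rw [Finset.sum_const, card_range, nsmul_eq_mul]; push_cast; ring
    _ ≤ ∑ i ∈ range (k + 1), x ^ i := Finset.sum_le_sum this

/-- Estimates on the blocks of the inverse Grushin problem when both roots lie
in the open unit disc:  `‖E‖ ≤ |a|⁻¹ min(N, 2/(1−|ζ₋|)) · min(N, 2/(1−|ζ₋|), 2/|1−ζ₊/ζ₋|)`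
and `‖E₊‖ = ‖E₋‖ ≤ |a|⁻¹ min(N, 2/(1−|ζ₋|))^{1/2} · min(N, 2/(1−|ζ₋|), 2/|1−ζ₊/ζ₋|)`. -/
theorem grushin_block_estimates (N : ℕ) (hN : 2 ≤ N) (a : ℂ) (ha : a ≠ 0)
    (ζp ζm : ℂ) (hp : ζp ≠ 0) (hm : ζm ≠ 0) (hne : ζp ≠ ζm)
    (h1 : ‖ζp‖ ≤ ‖ζm‖) (h2 : ‖ζm‖ < 1) :
    ‖Matrix.toEuclideanCLM (𝕜 := ℂ) (grushinEblock N a ζp ζm)‖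
        ≤ (‖a‖)⁻¹ * min (N : ℝ) (2 / (1 - ‖ζm‖)) *
            min (N : ℝ) (min (2 / (1 - ‖ζm‖))
              (2 / ‖1 - ζp / ζm‖)) ∧
    ‖grushinEp N a ζp ζm‖ = ‖grushinEm N a ζp ζm‖ ∧
    ‖grushinEp N a ζp ζm‖
        ≤ (‖a‖)⁻¹ * Real.sqrt (min (N : ℝ) (2 / (1 - ‖ζm‖))) *
            min (N : ℝ) (min (2 / (1 - ‖ζm‖))
              (2 / ‖1 - ζp / ζm‖)) := by
  set x : ℝ := ‖ζm‖ with hxdef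
  have hx0 : 0 ≤ x := norm_nonneg _
  have h1x : 0 < 1 - x := by linarith
  set D : ℝ := 2 / (1 - x) with hDdef
  set C : ℝ := 2 / ‖1 - ζp / ζm‖ with hCdef
  set A : ℝ := min (N : ℝ) D with hAdef
  set B : ℝ := min (N : ℝ) (min D C) with hBdef
  set c : ℕ → ℝ := fun m => ‖grushinC a ζp ζm m‖ with hcdef
  have hc0 : ∀ m, 0 ≤ c m := fun m => norm_nonneg _
  have hia : (0 : ℝ) ≤ (‖a‖)⁻¹ := by positivity
  have hr1 : (1 : ℂ) - ζp / ζm ≠ 0 := by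
    rw [sub_ne_zero]
    intro h
    exact hne (by field_simp at h; simpa using h.symm)
  have hCpos : 0 < C := by
    rw [hCdef]
    have := norm_pos_iff.mpr hr1
    positivity
  have hDpos : 0 < D := by rw [hDdef]; positivity
  have hNpos : (0 : ℝ) < (N : ℝ) := by
    have : (0 : ℕ) < N := by omega
    exact_mod_cast this
  have hApos : 0 < A := lt_min hNpos hDpos
  have hBpos : 0 < B := lt_min hNpos (lt_min hDpos hCpos)
  have hinv : 1 / (1 - x) ≤ D := by
    rw [hDdef, div_le_div_iff₀ h1x h1x]
    nlinarith
  -- bounds on c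
  have hc1 : ∀ m, c m ≤ (‖a‖)⁻¹ * (((m : ℝ) + 1) * x ^ m) :=
    fun m => grushin_cbound1 hne h1 m
  have hc2 : ∀ m, c m ≤ (‖a‖)⁻¹ * (C * x ^ m) :=
    fun m => grushin_cbound2 ha hm hne h1 m
  have hxk1 : ∀ m : ℕ, x ^ m ≤ 1 := fun m => pow_le_one₀ hx0 h2.le
  -- S ≤ A
  have hSN : ∑ k ∈ range N, x ^ k ≤ (N : ℝ) := by
    calc ∑ k ∈ range N, x ^ k ≤ ∑ _k ∈ range N, (1 : ℝ) :=
          Finset.sum_le_sum fun k _ => hxk1 k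
      _ = (N : ℝ) := by simp
  have hS : ∑ k ∈ range N, x ^ k ≤ A :=
    le_min hSN (le_trans (grushin_geom_le hx0 h2 N) hinv)
  -- pointwise bound c m ≤ |a|⁻¹ B for m < N
  have hmax : ∀ m, m < N → c m ≤ (‖a‖)⁻¹ * B := by
    intro m hmN
    have hN' : c m ≤ (‖a‖)⁻¹ * (N : ℝ) := by
      refine le_trans (hc1 m) (mul_le_mul_of_nonneg_left ?_ hia)
      calc ((m : ℝ) + 1) * x ^ m ≤ ((m : ℝ) + 1) * 1 :=
            mul_le_mul_of_nonneg_left (hxk1 m) (by positivity)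
        _ = (m : ℝ) + 1 := by ring
        _ ≤ (N : ℝ) := by exact_mod_cast Nat.succ_le_of_lt hmN
    have hD' : c m ≤ (‖a‖)⁻¹ * D := by
      refine le_trans (hc1 m) (mul_le_mul_of_nonneg_left ?_ hia)
      exact le_trans (grushin_kx_le hx0 h2 m) hinv
    have hC' : c m ≤ (‖a‖)⁻¹ * C := by
      refine le_trans (hc2 m) (mul_le_mul_of_nonneg_left ?_ hia)
      calc C * x ^ m ≤ C * 1 := mul_le_mul_of_nonneg_left (hxk1 m) hCpos.le
        _ = C := by ring
    have hdist : (‖a‖)⁻¹ * B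
        = min ((‖a‖)⁻¹ * (N : ℝ))
            (min ((‖a‖)⁻¹ * D) ((‖a‖)⁻¹ * C)) := by
      rw [hBdef, mul_min_of_nonneg _ _ hia, mul_min_of_nonneg _ _ hia]
    rw [hdist]
    exact le_min hN' (le_min hD' hC')
  -- sum bound
  have hsum : ∑ m ∈ range N, c m ≤ (‖a‖)⁻¹ * (A * B) := by
    have hBAC : B = min A C := by rw [hBdef, hAdef, min_assoc]
    rcases le_total C A with hCA | hAC
    · have hBC : B = C := by rw [hBAC, min_eq_right hCA]
      calc ∑ m ∈ range N, c m
          ≤ ∑ m ∈ range N, (‖a‖)⁻¹ * (C * x ^ m) :=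
            Finset.sum_le_sum fun m _ => hc2 m
        _ = (‖a‖)⁻¹ * (C * ∑ m ∈ range N, x ^ m) := by
            rw [← Finset.mul_sum, ← Finset.mul_sum]
        _ ≤ (‖a‖)⁻¹ * (C * A) :=
            mul_le_mul_of_nonneg_left
              (mul_le_mul_of_nonneg_left hS hCpos.le) hia
        _ = (‖a‖)⁻¹ * (A * B) := by rw [hBC]; ring
    · have hBA : B = A := by rw [hBAC, min_eq_left hAC]
      have hT : ∑ m ∈ range N, ((m : ℝ) + 1) * x ^ m ≤ A * A := by
        rcases le_total (N : ℝ) D with hND | hDN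
        · have hAN : A = (N : ℝ) := min_eq_left hND
          calc ∑ m ∈ range N, ((m : ℝ) + 1) * x ^ m
              ≤ ∑ m ∈ range N, (N : ℝ) * x ^ m := by
                refine Finset.sum_le_sum fun m hmr => ?_
                refine mul_le_mul_of_nonneg_right ?_ (by positivity)
                simp only [mem_range] at hmr
                exact_mod_cast Nat.succ_le_of_lt hmr
            _ = (N : ℝ) * ∑ m ∈ range N, x ^ m := by rw [← Finset.mul_sum]
            _ ≤ (N : ℝ) * A := mul_le_mul_of_nonneg_left hS hNpos.le
            _ = A * A := by rw [hAN]
        · have hAD : A = D := min_eq_right hDN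
          have hid := grushin_T_identity x N
          have hstep : (1 - x) * ∑ m ∈ range N, ((m : ℝ) + 1) * x ^ m
              ≤ ∑ m ∈ range N, x ^ m := by
            rw [hid]
            nlinarith [pow_nonneg hx0 N, hNpos]
          have hTle : ∑ m ∈ range N, ((m : ℝ) + 1) * x ^ m
              ≤ (∑ m ∈ range N, x ^ m) * (1 / (1 - x)) := by
            rw [mul_one_div, le_div_iff₀ h1x]
            linarith [hstep]
          calc ∑ m ∈ range N, ((m : ℝ) + 1) * x ^ m
              ≤ (∑ m ∈ range N, x ^ m) * (1 / (1 - x)) := hTle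
            _ ≤ A * D := by
                refine mul_le_mul hS hinv (by positivity) hApos.le
            _ = A * A := by rw [hAD]
      calc ∑ m ∈ range N, c m
          ≤ ∑ m ∈ range N, (‖a‖)⁻¹ * (((m : ℝ) + 1) * x ^ m) :=
            Finset.sum_le_sum fun m _ => hc1 m
        _ = (‖a‖)⁻¹ * ∑ m ∈ range N, ((m : ℝ) + 1) * x ^ m := by
            rw [← Finset.mul_sum]
        _ ≤ (‖a‖)⁻¹ * (A * A) := mul_le_mul_of_nonneg_left hT hia
        _ = (‖a‖)⁻¹ * (A * B) := by rw [hBA]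
  refine ⟨?_, ?_, ?_⟩
  · -- operator norm bound
    have hrow : ∀ j : Fin N, ∑ k, ‖grushinEblock N a ζp ζm j k‖
        ≤ ∑ m ∈ range N, c m := by
      intro j
      have hterm : ∀ k : Fin N, ‖grushinEblock N a ζp ζm j k‖
          = if (k : ℕ) + 1 ≤ (j : ℕ) then c ((j : ℕ) - (k : ℕ) - 1) else 0 := by
        intro k
        rw [grushinEblock]
        split <;> simp [hcdef]
      calc ∑ k, ‖grushinEblock N a ζp ζm j k‖
          = ∑ k ∈ range N, (if k + 1 ≤ (j : ℕ) then c ((j : ℕ) - k - 1) else 0) := by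
            rw [Finset.sum_congr rfl fun k _ => hterm k]
            exact Fin.sum_univ_eq_sum_range
              (fun k => if k + 1 ≤ (j : ℕ) then c ((j : ℕ) - k - 1) else 0) N
        _ = ∑ k ∈ range (j : ℕ), c ((j : ℕ) - k - 1) := by
            rw [← Finset.sum_range_add_sum_Ico _ (le_of_lt j.isLt)]
            have hz : ∑ k ∈ Ico (j : ℕ) N,
                (if k + 1 ≤ (j : ℕ) then c ((j : ℕ) - k - 1) else 0) = 0 := by
              refine Finset.sum_eq_zero fun k hk => ?_
              simp only [mem_Ico] at hk
              rw [if_neg (by omega)]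
            rw [hz, add_zero]
            refine Finset.sum_congr rfl fun k hk => ?_
            simp only [mem_range] at hk
            rw [if_pos (by omega)]
        _ = ∑ m ∈ range (j : ℕ), c m := by
            rw [show (fun k => c ((j : ℕ) - k - 1)) = fun k => c ((j : ℕ) - 1 - k) by
              funext k; congr 1; omega]
            exact Finset.sum_range_reflect c (j : ℕ)
        _ ≤ ∑ m ∈ range N, c m :=
            Finset.sum_le_sum_of_subset_of_nonneg
              (Finset.range_subset_range.2 (le_of_lt j.isLt))
              (fun m _ _ => hc0 m)
    have hcol : ∀ k : Fin N, ∑ j, ‖grushinEblock N a ζp ζm j k‖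
        ≤ ∑ m ∈ range N, c m := by
      intro k
      have hterm : ∀ j : Fin N, ‖grushinEblock N a ζp ζm j k‖
          = if (k : ℕ) + 1 ≤ (j : ℕ) then c ((j : ℕ) - (k : ℕ) - 1) else 0 := by
        intro j
        rw [grushinEblock]
        split <;> simp [hcdef]
      calc ∑ j, ‖grushinEblock N a ζp ζm j k‖
          = ∑ j ∈ range N, (if (k : ℕ) + 1 ≤ j then c (j - (k : ℕ) - 1) else 0) := by
            rw [Finset.sum_congr rfl fun j _ => hterm j]
            exact Fin.sum_univ_eq_sum_range
              (fun j => if (k : ℕ) + 1 ≤ j then c (j - (k : ℕ) - 1) else 0) N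
        _ = ∑ j ∈ Ico ((k : ℕ) + 1) N, c (j - (k : ℕ) - 1) := by
            rw [← Finset.sum_range_add_sum_Ico _ (Nat.succ_le_of_lt k.isLt)]
            have hz : ∑ j ∈ range ((k : ℕ) + 1),
                (if (k : ℕ) + 1 ≤ j then c (j - (k : ℕ) - 1) else 0) = 0 := by
              refine Finset.sum_eq_zero fun j hj => ?_
              simp only [mem_range] at hj
              rw [if_neg (by omega)]
            rw [hz, zero_add]
            refine Finset.sum_congr rfl fun j hj => ?_
            simp only [mem_Ico] at hj
            rw [if_pos (by omega)]
        _ = ∑ m ∈ range (N - ((k : ℕ) + 1)), c m := by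
            rw [Finset.sum_Ico_eq_sum_range]
            refine Finset.sum_congr rfl fun m _ => ?_
            congr 1
            omega
        _ ≤ ∑ m ∈ range N, c m :=
            Finset.sum_le_sum_of_subset_of_nonneg
              (Finset.range_subset_range.2 (by omega))
              (fun m _ _ => hc0 m)
    have hr0 : (0 : ℝ) ≤ ∑ m ∈ range N, c m := Finset.sum_nonneg fun m _ => hc0 m
    calc ‖Matrix.toEuclideanCLM (𝕜 := ℂ) (grushinEblock N a ζp ζm)‖
        ≤ ∑ m ∈ range N, c m := grushin_schur_bound _ _ hr0 hrow hcol
      _ ≤ (‖a‖)⁻¹ * (A * B) := hsum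
      _ = (‖a‖)⁻¹ * A * B := by ring
  · -- norm equality
    rw [EuclideanSpace.norm_eq, EuclideanSpace.norm_eq]
    congr 1
    have hl : ∑ j : Fin N, ‖grushinEp N a ζp ζm j‖ ^ 2
        = ∑ m ∈ range N, c m ^ 2 := by
      rw [show (fun j : Fin N => ‖grushinEp N a ζp ζm j‖ ^ 2)
          = fun j : Fin N => c (j : ℕ) ^ 2 by
        funext j; simp [grushinEp, hcdef]]
      exact Fin.sum_univ_eq_sum_range (fun m => c m ^ 2) N
    have hr : ∑ k : Fin N, ‖grushinEm N a ζp ζm k‖ ^ 2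
        = ∑ m ∈ range N, c (N - 1 - m) ^ 2 := by
      rw [show (fun k : Fin N => ‖grushinEm N a ζp ζm k‖ ^ 2)
          = fun k : Fin N => c (N - 1 - (k : ℕ)) ^ 2 by
        funext k; simp [grushinEm, hcdef]]
      exact Fin.sum_univ_eq_sum_range (fun m => c (N - 1 - m) ^ 2) N
    rw [hl, hr, Finset.sum_range_reflect (fun m => c m ^ 2) N]
  · -- vector norm bound
    have hsq : ∑ m ∈ range N, c m ^ 2
        ≤ ((‖a‖)⁻¹ * B) * ((‖a‖)⁻¹ * (A * B)) := by
      calc ∑ m ∈ range N, c m ^ 2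
          ≤ ∑ m ∈ range N, ((‖a‖)⁻¹ * B) * c m := by
            refine Finset.sum_le_sum fun m hmr => ?_
            simp only [mem_range] at hmr
            rw [sq]
            exact mul_le_mul_of_nonneg_right (hmax m hmr) (hc0 m)
        _ = ((‖a‖)⁻¹ * B) * ∑ m ∈ range N, c m := by rw [← Finset.mul_sum]
        _ ≤ ((‖a‖)⁻¹ * B) * ((‖a‖)⁻¹ * (A * B)) :=
            mul_le_mul_of_nonneg_left hsum (by positivity)
    have hEp : ‖grushinEp N a ζp ζm‖ = Real.sqrt (∑ m ∈ range N, c m ^ 2) := by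
      rw [EuclideanSpace.norm_eq]
      congr 1
      rw [show (fun j : Fin N => ‖grushinEp N a ζp ζm j‖ ^ 2)
          = fun j : Fin N => c (j : ℕ) ^ 2 by
        funext j; simp [grushinEp, hcdef]]
      exact Fin.sum_univ_eq_sum_range (fun m => c m ^ 2) N
    rw [hEp]
    have hR0 : 0 ≤ (‖a‖)⁻¹ * Real.sqrt A * B := by positivity
    have hR2 : ((‖a‖)⁻¹ * Real.sqrt A * B) ^ 2
        = ((‖a‖)⁻¹ * B) * ((‖a‖)⁻¹ * (A * B)) := by
      have : Real.sqrt A ^ 2 = A := Real.sq_sqrt hApos.le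
      nlinarith [this]
    calc Real.sqrt (∑ m ∈ range N, c m ^ 2)
        ≤ Real.sqrt (((‖a‖)⁻¹ * Real.sqrt A * B) ^ 2) := by
          refine Real.sqrt_le_sqrt ?_
          rw [hR2]
          exact hsq
      _ = (‖a‖)⁻¹ * Real.sqrt A * B := Real.sqrt_sq hR0

end
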